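/- Let k be a positive integer, β, γ > 0, N > 0. Let J be the k×k matrix with J₁₁ = 2γ − β − kγ, J₁ₘ = 2γ − β for m = 2,…,k, Jₘ,ₘ₋₁ = kγ and Jₘₘ = −kγ for m = 2,…,k, and all other entries zero. Let B̃ = Nγ(1 − γ/β) T, where T is the k×k tridiagonal matrix with 2 on the diagonal and −1 on the super- and sub-diagonals. Let V = (N/k)(1 − γ/β) I_k + (N/k²)(2γ/β − 1) 𝟙_k, where I_k is the identity matrix and 𝟙_k is the k×k matrix of all ones. Then J V + V Jᵀ = −B̃. -/

import Mathlib

open Matrix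

set_option maxHeartbeats 1000000 in
/-- The stationary covariance matrix of the multivariate Ornstein–Uhlenbeck
approximation to the SIS model with `k` Erlang infectious stages satisfies the
Lyapunov equation `J V + V Jᵀ = -B̃`, where `J` is the drift matrix, `B̃` the
local variance matrix, and
`V = (N/k)(1 - γ/β) I + (N/k²)(2γ/β - 1) 𝟙`. -/
theorem sis_erlang_OU_lyapunov
    (k : ℕ) (hk : 0 < k) (β γ N : ℝ) (hβ : 0 < β) (hγ : 0 < γ) (hN : 0 < N) :
    let J : Matrix (Fin k) (Fin k) ℝ := Matrix.of fun i j =>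
      if (i : ℕ) = 0 then
        (if (j : ℕ) = 0 then 2 * γ - β - k * γ else 2 * γ - β)
      else if (j : ℕ) + 1 = (i : ℕ) then k * γ
      else if j = i then -(k * γ)
      else 0
    let B : Matrix (Fin k) (Fin k) ℝ := Matrix.of fun i j =>
      N * γ * (1 - γ / β) *
        (if i = j then 2 else if (i : ℕ) + 1 = (j : ℕ) ∨ (j : ℕ) + 1 = (i : ℕ) then -1 else 0)
    let V : Matrix (Fin k) (Fin k) ℝ := Matrix.of fun i j =>
      (N / k) * (1 - γ / β) * (if i = j then 1 else 0) + (N / k ^ 2) * (2 * γ / β - 1)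
    J * V + V * Jᵀ = -B := by
  intro J B V
  have hk0 : (k:ℝ) ≠ 0 := Nat.cast_ne_zero.mpr hk.ne'
  have hβ0 : β ≠ 0 := hβ.ne'
  set a : ℝ := (N / k) * (1 - γ / β) with ha
  set b : ℝ := (N / k ^ 2) * (2 * γ / β - 1) with hb
  have rowsum : ∀ i : Fin k, ∑ m, J i m
      = if (i:ℕ) = 0 then (k:ℝ)*(2*γ-β) - k*γ else 0 := by
    intro i
    by_cases hi : (i:ℕ) = 0
    · have h1 : ∀ m : Fin k, J i m = (2*γ-β) + (if m = i then -((k:ℝ)*γ) else 0) := by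
        intro m
        by_cases hm : (m:ℕ) = 0
        · have hmi : m = i := Fin.ext (by omega)
          simp only [J, Matrix.of_apply, eq_true hi, eq_true hm, eq_true hmi, if_true]
          ring
        · have hmi : m ≠ i := fun h => hm (by rw [h, hi])
          simp only [J, Matrix.of_apply, eq_true hi, eq_false hm, eq_false hmi,
            if_true, if_false]
          ring
      rw [Finset.sum_congr rfl fun m _ => h1 m, Finset.sum_add_distrib,
        Finset.sum_const, Finset.sum_ite_eq' Finset.univ i]
      simp [hi]
      ring
    · have hip : (i:ℕ) - 1 < k := by omega
      set p : Fin k := ⟨(i:ℕ)-1, hip⟩ with hp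
      have hpv : (p:ℕ) = (i:ℕ) - 1 := rfl
      have hpi : p ≠ i := fun h => by rw [h] at hpv; omega
      have h1 : ∀ m : Fin k,
          J i m = (if m = p then (k:ℝ)*γ else 0) + (if m = i then -((k:ℝ)*γ) else 0) := by
        intro m
        by_cases h1 : (m:ℕ)+1 = (i:ℕ)
        · have hm : m = p := Fin.ext (by rw [hpv]; omega)
          have hmi : m ≠ i := hm ▸ hpi
          simp only [J, Matrix.of_apply, eq_false hi, eq_true h1, eq_true hm,
            eq_false hmi, if_true, if_false]
          ring
        · have hm : m ≠ p := fun h => h1 (by rw [h, hpv]; omega)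
          by_cases h2 : m = i
          · simp only [J, Matrix.of_apply, eq_false hi, eq_false h1, eq_true h2,
              eq_false hm, if_true, if_false]
            ring
          · simp only [J, Matrix.of_apply, eq_false hi, eq_false h1, eq_false h2,
              eq_false hm, if_false]
            ring
      rw [Finset.sum_congr rfl fun m _ => h1 m, Finset.sum_add_distrib,
        Finset.sum_ite_eq' Finset.univ p, Finset.sum_ite_eq' Finset.univ i]
      simp [hi]
  have hJV : ∀ i j : Fin k, (J * V) i j
      = J i j * a + (if (i:ℕ) = 0 then (k:ℝ)*(2*γ-β) - k*γ else 0) * b := by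
    intro i j
    rw [Matrix.mul_apply]
    have h1 : ∀ m : Fin k, J i m * V m j
        = (if m = j then J i m * a else 0) + J i m * b := by
      intro m
      simp only [V, Matrix.of_apply, ← ha, ← hb]
      by_cases h : m = j <;> simp [h] <;> ring
    rw [Finset.sum_congr rfl fun m _ => h1 m, Finset.sum_add_distrib,
      Finset.sum_ite_eq' Finset.univ j (fun m => J i m * a), ← Finset.sum_mul, rowsum i]
    simp
  have hVJ : ∀ i j : Fin k, (V * Jᵀ) i j
      = J j i * a + (if (j:ℕ) = 0 then (k:ℝ)*(2*γ-β) - k*γ else 0) * b := by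
    intro i j
    rw [Matrix.mul_apply]
    have h1 : ∀ m : Fin k, V i m * Jᵀ m j
        = (if i = m then J j m * a else 0) + J j m * b := by
      intro m
      simp only [V, Matrix.of_apply, Matrix.transpose_apply, ← ha, ← hb]
      by_cases h : i = m <;> simp [h] <;> ring
    rw [Finset.sum_congr rfl fun m _ => h1 m, Finset.sum_add_distrib,
      Finset.sum_ite_eq Finset.univ i (fun m => J j m * a), ← Finset.sum_mul, rowsum j]
    simp
  ext i j
  rw [Matrix.add_apply, hJV i j, hVJ i j]
  simp only [Matrix.neg_apply, B, J, Matrix.of_apply]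
  by_cases hij : i = j
  · subst hij
    have hne : ¬ ((i:ℕ)+1 = (i:ℕ)) := by omega
    by_cases hi0 : (i:ℕ) = 0
    · simp only [eq_true hi0, eq_true (rfl : i = i), eq_false hne, if_true, if_false]
      rw [ha, hb]; field_simp; try ring
    · simp only [eq_false hi0, eq_true (rfl : i = i), eq_false hne, if_true, if_false]
      rw [ha, hb]; field_simp; try ring
  · have hij' : (i:ℕ) ≠ (j:ℕ) := fun h => hij (Fin.ext h)
    have hji : ¬ (j = i) := fun h => hij h.symm
    by_cases hi0 : (i:ℕ) = 0
    · have hj0 : ¬ ((j:ℕ) = 0) := by omega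
      have hji1 : ¬ ((j:ℕ)+1 = (i:ℕ)) := by omega
      by_cases hij1 : (i:ℕ)+1 = (j:ℕ)
      · have hor : (i:ℕ)+1 = (j:ℕ) ∨ (j:ℕ)+1 = (i:ℕ) := Or.inl hij1
        simp only [eq_true hi0, eq_false hj0, eq_true hij1, eq_false hji1, eq_false hij,
          eq_false hji, eq_true hor, if_true, if_false, true_or, or_true, false_or, or_false]
        rw [ha, hb]; field_simp; try ring
      · have hor : ¬ ((i:ℕ)+1 = (j:ℕ) ∨ (j:ℕ)+1 = (i:ℕ)) := by omega
        simp only [eq_true hi0, eq_false hj0, eq_false hij1, eq_false hji1, eq_false hij,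
          eq_false hji, eq_false hor, if_true, if_false, true_or, or_true, false_or, or_false]
        rw [ha, hb]; field_simp; try ring
    · by_cases hj0 : (j:ℕ) = 0
      · have hij1 : ¬ ((i:ℕ)+1 = (j:ℕ)) := by omega
        by_cases hji1 : (j:ℕ)+1 = (i:ℕ)
        · have hor : (i:ℕ)+1 = (j:ℕ) ∨ (j:ℕ)+1 = (i:ℕ) := Or.inr hji1
          simp only [eq_false hi0, eq_true hj0, eq_false hij1, eq_true hji1, eq_false hij,
            eq_false hji, eq_true hor, if_true, if_false, true_or, or_true, false_or, or_false]
          rw [ha, hb]; field_simp; try ring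
        · have hor : ¬ ((i:ℕ)+1 = (j:ℕ) ∨ (j:ℕ)+1 = (i:ℕ)) := by omega
          simp only [eq_false hi0, eq_true hj0, eq_false hij1, eq_false hji1, eq_false hij,
            eq_false hji, eq_false hor, if_true, if_false, true_or, or_true, false_or, or_false]
          rw [ha, hb]; field_simp; try ring
      · by_cases hji1 : (j:ℕ)+1 = (i:ℕ)
        · have hij1 : ¬ ((i:ℕ)+1 = (j:ℕ)) := by omega
          have hor : (i:ℕ)+1 = (j:ℕ) ∨ (j:ℕ)+1 = (i:ℕ) := Or.inr hji1
          simp only [eq_false hi0, eq_false hj0, eq_false hij1, eq_true hji1, eq_false hij,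
            eq_false hji, eq_true hor, if_true, if_false, true_or, or_true, false_or, or_false]
          rw [ha, hb]; field_simp; try ring
        · by_cases hij1 : (i:ℕ)+1 = (j:ℕ)
          · have hor : (i:ℕ)+1 = (j:ℕ) ∨ (j:ℕ)+1 = (i:ℕ) := Or.inl hij1
            simp only [eq_false hi0, eq_false hj0, eq_true hij1, eq_false hji1, eq_false hij,
              eq_false hji, eq_true hor, if_true, if_false, true_or, or_true, false_or, or_false]
            rw [ha, hb]; field_simp; try ring
          · have hor : ¬ ((i:ℕ)+1 = (j:ℕ) ∨ (j:ℕ)+1 = (i:ℕ)) := by omega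
            simp only [eq_false hi0, eq_false hj0, eq_false hij1, eq_false hji1, eq_false hij,
              eq_false hji, eq_false hor, if_true, if_false, true_or, or_true, false_or, or_false]
            rw [ha, hb]; field_simp; try ring
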